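/- Let a, b : ℝ → ℝ be continuous functions such that b is bounded and there exists a₀ > 0 with a(u) ≥ a₀ for all u ∈ ℝ. Suppose x : ℝ → ℝ is differentiable, bounded, and satisfies x'(t) = b(t) - a(t) · x(t) for all t ∈ ℝ. Then for every t ∈ ℝ, x(t) = ∫_0^∞ b(t - s) · exp(-∫_{t-s}^t a(u) du) ds. -/

import Mathlib

open MeasureTheory

/-- A bounded solution on all of `ℝ` of `x' = b - a·x`, with `b` bounded and
`a ≥ a₀ > 0`, equals the variation-of-constants integral over its history. -/
theorem stmt1
    (a b : ℝ → ℝ) (ha : Continuous a) (hb : Continuous b)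
    (hbbdd : ∃ C, ∀ t, |b t| ≤ C)
    (a₀ : ℝ) (ha₀ : 0 < a₀) (halb : ∀ u, a₀ ≤ a u)
    (x : ℝ → ℝ)
    (hxbdd : ∃ C, ∀ t, |x t| ≤ C)
    (hx : ∀ t, HasDerivAt x (b t - a t * x t) t) :
    ∀ t : ℝ, x t = ∫ s in Set.Ioi (0 : ℝ),
      b (t - s) * Real.exp (-∫ u in (t - s)..t, a u) := by
  obtain ⟨C, hC⟩ := hbbdd
  obtain ⟨D, hD⟩ := hxbdd
  intro t
  set A : ℝ → ℝ := fun c => ∫ u in c..t, a u with hAdef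
  have hAderiv : ∀ c, HasDerivAt A (-(a c)) c := by
    intro c
    have h1 : HasDerivAt (fun c => ∫ u in t..c, a u) (a c) c :=
      intervalIntegral.integral_hasDerivAt_right (ha.intervalIntegrable _ _)
        (ha.stronglyMeasurableAtFilter _ _) ha.continuousAt
    have h2 : A = fun c => -∫ u in t..c, a u := by
      funext c; exact intervalIntegral.integral_symm t c
    rw [h2]
    exact h1.neg
  have hAcont : Continuous A :=
    continuous_iff_continuousAt.2 fun c => (hAderiv c).continuousAt
  set g : ℝ → ℝ := fun s => b (t - s) * Real.exp (-(A (t - s))) with hgdef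
  have hgcont : Continuous g := by
    apply Continuous.mul
    · exact hb.comp (continuous_const.sub continuous_id)
    · exact Real.continuous_exp.comp
        ((hAcont.comp (continuous_const.sub continuous_id)).neg)
  set H : ℝ → ℝ := fun s => x (t - s) * Real.exp (-(A (t - s))) with hHdef
  have hHderiv : ∀ s, HasDerivAt H (-(g s)) s := by
    intro s
    have h1 : ∀ c, HasDerivAt (fun c => x c * Real.exp (-(A c)))
        (b c * Real.exp (-(A c))) c := by
      intro c
      have he : HasDerivAt (fun c => Real.exp (-(A c)))
          (Real.exp (-(A c)) * a c) c := by
        have := ((hAderiv c).neg).exp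
        simpa using this
      have := (hx c).mul he
      refine this.congr_deriv ?_
      ring
    have hin : HasDerivAt (fun s : ℝ => t - s) (-1) s :=
      (hasDerivAt_id s).const_sub t
    have := (h1 (t - s)).comp s hin
    refine this.congr_deriv ?_
    simp [hgdef]
  have hkey : ∀ T : ℝ, ∫ s in (0:ℝ)..T, g s = x t - H T := by
    intro T
    have := intervalIntegral.integral_eq_sub_of_hasDerivAt
      (f := H) (f' := fun s => -(g s)) (a := 0) (b := T)
      (fun s _ => hHderiv s) (hgcont.neg.intervalIntegrable _ _)
    have h0 : H 0 = x t := by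
      simp [hHdef, hAdef, intervalIntegral.integral_same]
    rw [intervalIntegral.integral_neg] at this
    have : ∫ s in (0:ℝ)..T, g s = H 0 - H T := by linarith
    rw [this, h0]
  have hAlb : ∀ s : ℝ, 0 ≤ s → a₀ * s ≤ A (t - s) := by
    intro s hs
    have hle : t - s ≤ t := by linarith
    have h1 : ∫ u in (t - s)..t, (a₀ : ℝ) ≤ ∫ u in (t - s)..t, a u := by
      apply intervalIntegral.integral_mono_on hle
        (intervalIntegrable_const) (ha.intervalIntegrable _ _)
      intro u _
      exact halb u
    have h2 : (∫ u in (t - s)..t, (a₀ : ℝ)) = a₀ * s := by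
      simp [mul_comm]
    calc a₀ * s = ∫ u in (t - s)..t, (a₀ : ℝ) := h2.symm
      _ ≤ A (t - s) := h1
  have hCnn : 0 ≤ C := le_trans (abs_nonneg _) (hC 0)
  have hbound : ∀ s : ℝ, 0 ≤ s → |g s| ≤ C * Real.exp (-a₀ * s) := by
    intro s hs
    have h1 : |g s| = |b (t - s)| * Real.exp (-(A (t - s))) := by
      rw [hgdef]; rw [abs_mul, abs_of_pos (Real.exp_pos _)]
    rw [h1]
    apply mul_le_mul (hC _) _ (Real.exp_pos _).le hCnn
    apply Real.exp_le_exp.2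
    have := hAlb s hs
    linarith [this]
  have hgint : IntegrableOn g (Set.Ioi (0:ℝ)) := by
    have hdom : IntegrableOn (fun s => C * Real.exp (-a₀ * s)) (Set.Ioi (0:ℝ)) :=
      (exp_neg_integrableOn_Ioi 0 ha₀).const_mul C
    apply Integrable.mono' hdom hgcont.aestronglyMeasurable.restrict
    filter_upwards [ae_restrict_mem measurableSet_Ioi] with s hs
    exact hbound s (le_of_lt hs)
  have T1 : Filter.Tendsto (fun T => ∫ s in (0:ℝ)..T, g s) Filter.atTop
      (nhds (∫ s in Set.Ioi (0:ℝ), g s)) :=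
    intervalIntegral_tendsto_integral_Ioi 0 hgint Filter.tendsto_id
  have hHtend : Filter.Tendsto H Filter.atTop (nhds 0) := by
    apply squeeze_zero_norm'
    · filter_upwards [Filter.eventually_ge_atTop (0:ℝ)] with s hs
      show |H s| ≤ D * Real.exp (-a₀ * s)
      have h1 : |H s| = |x (t - s)| * Real.exp (-(A (t - s))) := by
        rw [hHdef]; rw [abs_mul, abs_of_pos (Real.exp_pos _)]
      rw [h1]
      have hDnn : 0 ≤ D := le_trans (abs_nonneg _) (hD 0)
      apply mul_le_mul (hD _) _ (Real.exp_pos _).le hDnn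
      apply Real.exp_le_exp.2
      linarith [hAlb s hs]
    · have h1 : Filter.Tendsto (fun s : ℝ => Real.exp (-a₀ * s)) Filter.atTop
          (nhds 0) := by
        have : Filter.Tendsto (fun s : ℝ => -a₀ * s) Filter.atTop Filter.atBot :=
          Filter.Tendsto.const_mul_atTop_of_neg (neg_lt_zero.2 ha₀) Filter.tendsto_id
        exact Real.tendsto_exp_atBot.comp this
      have := h1.const_mul D
      simpa using this
  have T2 : Filter.Tendsto (fun T => x t - H T) Filter.atTop (nhds (x t)) := by
    have := (tendsto_const_nhds (x := x t) (f := Filter.atTop (α := ℝ))).sub hHtend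
    simpa using this
  have T1' : Filter.Tendsto (fun T => x t - H T) Filter.atTop
      (nhds (∫ s in Set.Ioi (0:ℝ), g s)) := by
    apply T1.congr
    intro T; exact hkey T
  exact tendsto_nhds_unique T2 T1'
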